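/- Assume: (i) the SBP property Q + Qᵀ = V_fᵀ B V_f, (ii) Q 1 = 0 and t_Lᵀ1 = t_Rᵀ1 = 1, and (iii) the entropy setup with f_S symmetric and entropy conservative. Define the 2(N+1)×2(N+1) coupled matrices Q_h = [[S, (1/2)t_R t_Lᵀ],[-(1/2)t_L t_Rᵀ, S]] + (1/2)·blockdiag(-t_L t_Lᵀ, t_R t_Rᵀ), B_h = blockdiag(-t_L t_Lᵀ, t_R t_Rᵀ), and W_h = blockdiag(W, W) with diagonal entries w̃_1,…,w̃_{2(N+1)}. Suppose u_h(t) ∈ (ℝ^m)^{2(N+1)} is differentiable in t and satisfies, componentwise, W_h (d u_h/dt) + 2 (Q_h ∘ F_S) 1 = 0, where ((Q_h ∘ F_S)1)_i := Σ_j (Q_h)_{ij} f_S((u_h)_i, (u_h)_j). Then u_h satisfies the semi-discrete entropy conservation identity d/dt [ Σ_i w̃_i S((u_h)_i(t)) ] + Σ_{i,j} (B_h)_{ij} v((u_h)_i)·f_S((u_h)_i,(u_h)_j) - Σ_{i,j} (B_h)_{ij} ψ((u_h)_j) = 0 for all t. -/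

import Mathlib

open Matrix BigOperators

/-- **Semi-discrete entropy conservation for the coupled generalized-SBP two-element
scheme.** If `u_h` solves `W_h du_h/dt + 2 (Q_h ∘ F_S) 1 = 0` with a symmetric, entropy
conservative two-point flux `f_S`, then
`d/dt Σ w̃ S(u_h) + Σ (B_h)_{ij} v(u_i)·f_S(u_i,u_j) - Σ (B_h)_{ij} ψ(u_j) = 0`. -/
theorem coupled_two_element_entropy_conservation
    (N m : ℕ) (hm : 1 ≤ m)
    (w : Fin (N + 1) → ℝ)
    (Q : Matrix (Fin (N + 1)) (Fin (N + 1)) ℝ)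
    (Vf : Matrix (Fin 2) (Fin (N + 1)) ℝ)
    (B : Matrix (Fin 2) (Fin 2) ℝ)
    (hB : B = Matrix.diagonal ![(-1 : ℝ), 1])
    -- (i) the SBP property
    (hSBP : Q + Qᵀ = Vfᵀ * B * Vf)
    -- (ii) row sums
    (hQ1 : Q *ᵥ (fun _ => (1 : ℝ)) = 0)
    (htL1 : ∑ j, Vf 0 j = 1) (htR1 : ∑ j, Vf 1 j = 1)
    (tL tR : Fin (N + 1) → ℝ)
    (htL : ∀ j, tL j = Vf 0 j) (htR : ∀ j, tR j = Vf 1 j)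
    (S : Matrix (Fin (N + 1)) (Fin (N + 1)) ℝ)
    (hS : S = Q - (1 / 2 : ℝ) • (Vfᵀ * B * Vf))
    (Qh Bh : Matrix (Fin (N + 1) ⊕ Fin (N + 1)) (Fin (N + 1) ⊕ Fin (N + 1)) ℝ)
    (hQh : Qh = Matrix.fromBlocks
        S ((1 / 2 : ℝ) • Matrix.vecMulVec tR tL)
        (-((1 / 2 : ℝ) • Matrix.vecMulVec tL tR)) S
      + (1 / 2 : ℝ) • Matrix.fromBlocks (-Matrix.vecMulVec tL tL) 0 0 (Matrix.vecMulVec tR tR))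
    (hBh : Bh = Matrix.fromBlocks (-Matrix.vecMulVec tL tL) 0 0 (Matrix.vecMulVec tR tR))
    -- (iii) the entropy setup
    (Sfun : (Fin m → ℝ) → ℝ) (v : (Fin m → ℝ) → Fin m → ℝ)
    (ψ : (Fin m → ℝ) → ℝ) (fS : (Fin m → ℝ) → (Fin m → ℝ) → Fin m → ℝ)
    (hgrad : ∀ y : Fin m → ℝ,
      HasFDerivAt Sfun (∑ c, v y c • (ContinuousLinearMap.proj c : (Fin m → ℝ) →L[ℝ] ℝ)) y)
    (hsym : ∀ a b, fS a b = fS b a)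
    (hec : ∀ a b, (v a - v b) ⬝ᵥ fS a b = ψ a - ψ b)
    -- the semi-discrete solution and formulation
    (uh : ℝ → (Fin (N + 1) ⊕ Fin (N + 1)) → Fin m → ℝ)
    (hd : ∀ k c, Differentiable ℝ (fun t => uh t k c))
    (hform : ∀ (t : ℝ) (k : Fin (N + 1) ⊕ Fin (N + 1)) (c : Fin m),
      Sum.elim w w k * deriv (fun s => uh s k c) t
        + 2 * ∑ j, Qh k j * fS (uh t k) (uh t j) c = 0) :
    ∀ t : ℝ,
      deriv (fun s => ∑ k, Sum.elim w w k * Sfun (uh s k)) t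
        + (∑ i, ∑ j, Bh i j * (v (uh t i) ⬝ᵥ fS (uh t i) (uh t j)))
        - (∑ i, ∑ j, Bh i j * ψ (uh t j)) = 0 := by
  intro t
  -- entrywise value of Vfᵀ * B * Vf
  have hVBV : ∀ i j, (Vfᵀ * B * Vf) i j = -(tL i * tL j) + tR i * tR j := by
    intro i j
    simp [Matrix.mul_apply, hB, Fin.sum_univ_two, htL, htR, Matrix.diagonal_apply]
  have hQQ : ∀ i j, Q i j + Q j i = (Vfᵀ * B * Vf) i j := by
    intro i j
    have h := congrFun (congrFun hSBP i) j
    simpa [Matrix.add_apply, Matrix.transpose_apply] using h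
  have hSapp : ∀ i j, S i j = Q i j - (1 / 2 : ℝ) * (Vfᵀ * B * Vf) i j := by
    intro i j; rw [hS]; simp [Matrix.sub_apply, Matrix.smul_apply]
  have hSkew : ∀ i j, S i j + S j i = 0 := by
    intro i j
    have h1 := hQQ i j
    have h2 := hVBV i j
    have h3 := hVBV j i
    have h4 : (Vfᵀ * B * Vf) j i = (Vfᵀ * B * Vf) i j := by rw [h2, h3]; ring
    rw [hSapp, hSapp, h4]
    linarith
  have hQrow : ∀ i, ∑ j, Q i j = 0 := by
    intro i
    have h := congrFun hQ1 i
    simpa [Matrix.mulVec, dotProduct] using h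
  have htLs : ∑ j, tL j = 1 := by
    rw [Finset.sum_congr rfl fun j _ => htL j]; exact htL1
  have htRs : ∑ j, tR j = 1 := by
    rw [Finset.sum_congr rfl fun j _ => htR j]; exact htR1
  have hSrow : ∀ i, ∑ j, S i j = (1 / 2 : ℝ) * tL i - (1 / 2 : ℝ) * tR i := by
    intro i
    calc ∑ j, S i j
        = ∑ j, (Q i j + (1 / 2 * tL i) * tL j + (-(1 / 2) * tR i) * tR j) := by
          refine Finset.sum_congr rfl fun j _ => ?_
          rw [hSapp, hVBV]; ring
      _ = (∑ j, Q i j) + (1 / 2 * tL i) * (∑ j, tL j) + (-(1 / 2) * tR i) * (∑ j, tR j) := by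
          rw [Finset.sum_add_distrib, Finset.sum_add_distrib, ← Finset.mul_sum, ← Finset.mul_sum]
      _ = (1 / 2 : ℝ) * tL i - (1 / 2 : ℝ) * tR i := by
          rw [hQrow, htLs, htRs]; ring
  -- entrywise values of Qh and Bh
  have hQ11 : ∀ i j, Qh (Sum.inl i) (Sum.inl j) = S i j - (1 / 2 : ℝ) * (tL i * tL j) := by
    intro i j; rw [hQh]; simp [Matrix.vecMulVec_apply]; ring
  have hQ12 : ∀ i j, Qh (Sum.inl i) (Sum.inr j) = (1 / 2 : ℝ) * (tR i * tL j) := by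
    intro i j; rw [hQh]; simp [Matrix.vecMulVec_apply]
  have hQ21 : ∀ i j, Qh (Sum.inr i) (Sum.inl j) = -((1 / 2 : ℝ) * (tL i * tR j)) := by
    intro i j; rw [hQh]; simp [Matrix.vecMulVec_apply]
  have hQ22 : ∀ i j, Qh (Sum.inr i) (Sum.inr j) = S i j + (1 / 2 : ℝ) * (tR i * tR j) := by
    intro i j; rw [hQh]; simp [Matrix.vecMulVec_apply]
  have hB11 : ∀ i j, Bh (Sum.inl i) (Sum.inl j) = -(tL i * tL j) := by
    intro i j; rw [hBh]; simp [Matrix.vecMulVec_apply]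
  have hB12 : ∀ i j, Bh (Sum.inl i) (Sum.inr j) = 0 := by
    intro i j; rw [hBh]; simp
  have hB21 : ∀ i j, Bh (Sum.inr i) (Sum.inl j) = 0 := by
    intro i j; rw [hBh]; simp
  have hB22 : ∀ i j, Bh (Sum.inr i) (Sum.inr j) = tR i * tR j := by
    intro i j; rw [hBh]; simp [Matrix.vecMulVec_apply]
  -- Qh + Qhᵀ = Bh (entrywise)
  have hA : ∀ k j, Qh k j + Qh j k = Bh k j := by
    rintro (i | i) (j | j)
    · rw [hQ11, hQ11, hB11]; linear_combination hSkew i j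
    · rw [hQ12, hQ21, hB12]; ring
    · rw [hQ21, hQ12, hB21]; ring
    · rw [hQ22, hQ22, hB22]; linear_combination hSkew i j
  have hBsym : ∀ k j, Bh k j = Bh j k := by
    intro k j
    have h1 := hA k j
    have h2 := hA j k
    linarith
  -- row sums of Qh vanish
  have hQhrow : ∀ k, ∑ j, Qh k j = 0 := by
    rintro (i | i) <;> rw [Fintype.sum_sum_type]
    · have e1 : ∑ j, Qh (Sum.inl i) (Sum.inl j) = (∑ j, S i j) - (1 / 2 * tL i) * ∑ j, tL j := by
        rw [Finset.mul_sum, ← Finset.sum_sub_distrib]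
        exact Finset.sum_congr rfl fun j _ => by rw [hQ11]; ring
      have e2 : ∑ j, Qh (Sum.inl i) (Sum.inr j) = (1 / 2 * tR i) * ∑ j, tL j := by
        rw [Finset.mul_sum]
        exact Finset.sum_congr rfl fun j _ => by rw [hQ12]; ring
      rw [e1, e2, hSrow, htLs]; ring
    · have e1 : ∑ j, Qh (Sum.inr i) (Sum.inl j) = (-(1 / 2) * tL i) * ∑ j, tR j := by
        rw [Finset.mul_sum]
        exact Finset.sum_congr rfl fun j _ => by rw [hQ21]; ring
      have e2 : ∑ j, Qh (Sum.inr i) (Sum.inr j) = (∑ j, S i j) + (1 / 2 * tR i) * ∑ j, tR j := by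
        rw [Finset.mul_sum, ← Finset.sum_add_distrib]
        exact Finset.sum_congr rfl fun j _ => by rw [hQ22]; ring
      rw [e1, e2, hSrow, htRs]; ring
  -- column sums of Qh
  have hQhcol : ∀ j, ∑ k, Qh k j = ∑ k, Bh j k := by
    intro j
    have e : ∀ k, Qh k j = Bh j k - Qh j k := by
      intro k
      have h1 := hA k j
      have h2 := hBsym k j
      linarith
    rw [Finset.sum_congr rfl fun k _ => e k, Finset.sum_sub_distrib, hQhrow, sub_zero]
  -- the derivative of the total entropy
  have hderiv : deriv (fun s => ∑ k, Sum.elim w w k * Sfun (uh s k)) t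
      = ∑ k, Sum.elim w w k * ∑ c, v (uh t k) c * deriv (fun s => uh s k c) t := by
    have hk : ∀ k ∈ (Finset.univ : Finset (Fin (N + 1) ⊕ Fin (N + 1))),
        HasDerivAt (fun s => Sum.elim w w k * Sfun (uh s k))
          (Sum.elim w w k * ∑ c, v (uh t k) c * deriv (fun s => uh s k c) t) t := by
      intro k _
      have h1 : HasDerivAt (fun s => uh s k) (fun c => deriv (fun s => uh s k c) t) t := by
        rw [hasDerivAt_pi]
        intro c
        exact ((hd k c) t).hasDerivAt
      have h2 := (hgrad (uh t k)).comp_hasDerivAt t h1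
      have h3 : (∑ c, v (uh t k) c • (ContinuousLinearMap.proj c : (Fin m → ℝ) →L[ℝ] ℝ))
          (fun c => deriv (fun s => uh s k c) t)
          = ∑ c, v (uh t k) c * deriv (fun s => uh s k c) t := by
        simp [ContinuousLinearMap.sum_apply, ContinuousLinearMap.smul_apply]
      rw [h3] at h2
      have h4 : HasDerivAt (fun s => Sfun (uh s k))
          (∑ c, v (uh t k) c * deriv (fun s => uh s k c) t) t := h2
      exact h4.const_mul _
    exact (HasDerivAt.fun_sum hk).deriv
  -- use the scheme to rewrite each weighted derivative
  have key : ∀ k, Sum.elim w w k * ∑ c, v (uh t k) c * deriv (fun s => uh s k c) t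
      = -2 * ∑ j, Qh k j * (v (uh t k) ⬝ᵥ fS (uh t k) (uh t j)) := by
    intro k
    have h1 : ∀ c, Sum.elim w w k * deriv (fun s => uh s k c) t
        = -(2 * ∑ j, Qh k j * fS (uh t k) (uh t j) c) := by
      intro c
      have := hform t k c
      linarith
    calc Sum.elim w w k * ∑ c, v (uh t k) c * deriv (fun s => uh s k c) t
        = ∑ c, v (uh t k) c * (Sum.elim w w k * deriv (fun s => uh s k c) t) := by
          rw [Finset.mul_sum]
          exact Finset.sum_congr rfl fun c _ => by ring
      _ = ∑ c, v (uh t k) c * (-(2 * ∑ j, Qh k j * fS (uh t k) (uh t j) c)) :=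
          Finset.sum_congr rfl fun c _ => by rw [h1]
      _ = -2 * ∑ c, v (uh t k) c * ∑ j, Qh k j * fS (uh t k) (uh t j) c := by
          rw [Finset.mul_sum]
          exact Finset.sum_congr rfl fun c _ => by ring
      _ = -2 * ∑ j, Qh k j * (v (uh t k) ⬝ᵥ fS (uh t k) (uh t j)) := by
          congr 1
          calc ∑ c, v (uh t k) c * ∑ j, Qh k j * fS (uh t k) (uh t j) c
              = ∑ c, ∑ j, v (uh t k) c * (Qh k j * fS (uh t k) (uh t j) c) :=
                Finset.sum_congr rfl fun c _ => Finset.mul_sum _ _ _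
            _ = ∑ j, ∑ c, v (uh t k) c * (Qh k j * fS (uh t k) (uh t j) c) :=
                Finset.sum_comm
            _ = ∑ j, Qh k j * (v (uh t k) ⬝ᵥ fS (uh t k) (uh t j)) := by
                refine Finset.sum_congr rfl fun j _ => ?_
                rw [dotProduct, Finset.mul_sum]
                exact Finset.sum_congr rfl fun c _ => by ring
  have hsum : ∑ k, Sum.elim w w k * ∑ c, v (uh t k) c * deriv (fun s => uh s k c) t
      = -2 * ∑ k, ∑ j, Qh k j * (v (uh t k) ⬝ᵥ fS (uh t k) (uh t j)) := by
    rw [Finset.mul_sum]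
    exact Finset.sum_congr rfl fun k _ => key k
  -- index-swap identity for the Q-sum
  have hswap : (∑ k, ∑ j, Qh k j * (v (uh t k) ⬝ᵥ fS (uh t k) (uh t j)))
      = ∑ k, ∑ j, Qh j k * (v (uh t j) ⬝ᵥ fS (uh t k) (uh t j)) := by
    rw [Finset.sum_comm]
    exact Finset.sum_congr rfl fun k _ => Finset.sum_congr rfl fun j _ => by
      rw [hsym (uh t k) (uh t j)]
  -- pointwise entropy-conservation identity
  have pointwise : ∀ k j, Qh k j * (v (uh t k) ⬝ᵥ fS (uh t k) (uh t j))
      + Qh j k * (v (uh t j) ⬝ᵥ fS (uh t k) (uh t j))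
      = Qh k j * (ψ (uh t k) - ψ (uh t j))
        + Bh k j * (v (uh t j) ⬝ᵥ fS (uh t k) (uh t j)) := by
    intro k j
    have he : (v (uh t k) ⬝ᵥ fS (uh t k) (uh t j)) - (v (uh t j) ⬝ᵥ fS (uh t k) (uh t j))
        = ψ (uh t k) - ψ (uh t j) := by
      have h := hec (uh t k) (uh t j)
      rw [sub_dotProduct] at h
      exact h
    have hb := hA k j
    linear_combination Qh k j * he + (v (uh t j) ⬝ᵥ fS (uh t k) (uh t j)) * hb
  have h2T : 2 * (∑ k, ∑ j, Qh k j * (v (uh t k) ⬝ᵥ fS (uh t k) (uh t j)))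
      = (∑ k, ∑ j, Qh k j * (ψ (uh t k) - ψ (uh t j)))
        + ∑ k, ∑ j, Bh k j * (v (uh t j) ⬝ᵥ fS (uh t k) (uh t j)) := by
    rw [two_mul]
    nth_rewrite 2 [hswap]
    calc (∑ k, ∑ j, Qh k j * (v (uh t k) ⬝ᵥ fS (uh t k) (uh t j)))
          + ∑ k, ∑ j, Qh j k * (v (uh t j) ⬝ᵥ fS (uh t k) (uh t j))
        = ∑ k, ∑ j, (Qh k j * (v (uh t k) ⬝ᵥ fS (uh t k) (uh t j))
            + Qh j k * (v (uh t j) ⬝ᵥ fS (uh t k) (uh t j))) := by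
          rw [← Finset.sum_add_distrib]
          exact Finset.sum_congr rfl fun k _ => by rw [← Finset.sum_add_distrib]
      _ = ∑ k, ∑ j, (Qh k j * (ψ (uh t k) - ψ (uh t j))
            + Bh k j * (v (uh t j) ⬝ᵥ fS (uh t k) (uh t j))) :=
          Finset.sum_congr rfl fun k _ => Finset.sum_congr rfl fun j _ => pointwise k j
      _ = (∑ k, ∑ j, Qh k j * (ψ (uh t k) - ψ (uh t j)))
            + ∑ k, ∑ j, Bh k j * (v (uh t j) ⬝ᵥ fS (uh t k) (uh t j)) := by
          rw [← Finset.sum_add_distrib]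
          exact Finset.sum_congr rfl fun k _ => by rw [← Finset.sum_add_distrib]
  -- the ψ part
  have hpsi : ∑ k, ∑ j, Qh k j * (ψ (uh t k) - ψ (uh t j))
      = -(∑ i, ∑ j, Bh i j * ψ (uh t j)) := by
    have e1 : ∑ k, ∑ j, Qh k j * (ψ (uh t k) - ψ (uh t j))
        = ∑ k, ((∑ j, Qh k j) * ψ (uh t k)) - ∑ k, ∑ j, Qh k j * ψ (uh t j) := by
      rw [← Finset.sum_sub_distrib]
      refine Finset.sum_congr rfl fun k _ => ?_
      rw [Finset.sum_mul, ← Finset.sum_sub_distrib]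
      exact Finset.sum_congr rfl fun j _ => by ring
    rw [e1]
    have e2 : ∑ k, ((∑ j, Qh k j) * ψ (uh t k)) = 0 := by
      refine Finset.sum_eq_zero fun k _ => ?_
      rw [hQhrow, zero_mul]
    have e3 : ∑ k, ∑ j, Qh k j * ψ (uh t j) = ∑ i, ∑ j, Bh i j * ψ (uh t j) := by
      calc ∑ k, ∑ j, Qh k j * ψ (uh t j)
          = ∑ j, ∑ k, Qh k j * ψ (uh t j) := Finset.sum_comm
        _ = ∑ j, ∑ k, Bh j k * ψ (uh t j) := by
            refine Finset.sum_congr rfl fun j _ => ?_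
            rw [← Finset.sum_mul, ← Finset.sum_mul, hQhcol]
        _ = ∑ j, ∑ k, Bh k j * ψ (uh t j) :=
            Finset.sum_congr rfl fun j _ => Finset.sum_congr rfl fun k _ => by rw [hBsym]
        _ = ∑ i, ∑ j, Bh i j * ψ (uh t j) := Finset.sum_comm
    rw [e2, e3]
    ring
  -- the boundary-flux part
  have hflux : ∑ k, ∑ j, Bh k j * (v (uh t j) ⬝ᵥ fS (uh t k) (uh t j))
      = ∑ i, ∑ j, Bh i j * (v (uh t i) ⬝ᵥ fS (uh t i) (uh t j)) := by
    calc ∑ k, ∑ j, Bh k j * (v (uh t j) ⬝ᵥ fS (uh t k) (uh t j))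
        = ∑ j, ∑ k, Bh k j * (v (uh t j) ⬝ᵥ fS (uh t k) (uh t j)) := Finset.sum_comm
      _ = ∑ i, ∑ j, Bh i j * (v (uh t i) ⬝ᵥ fS (uh t i) (uh t j)) :=
          Finset.sum_congr rfl fun i _ => Finset.sum_congr rfl fun j _ => by
            rw [hBsym, hsym (uh t j) (uh t i)]
  rw [hpsi, hflux] at h2T
  rw [hderiv, hsum]
  linarith [h2T]
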